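/- Let D be an abelian category with enough projectives and enough injectives, let X be a class of objects of D closed under isomorphisms, let D be an object of D and let n ≥ 0 be an integer. Then the following are equivalent: (1) X^⊥-cores D ≤ n; (2) Ext^{n+k}(X, D) = 0 for every X in X and every k ≥ 1; (3) whenever 0 → D → Y_0 → ⋯ → Y_{n-1} → Y_n → 0 is an exact sequence with Y_0, …, Y_{n-1} in X^⊥, the object Y_n lies in X^⊥. -/

import Mathlib

open CategoryTheory CategoryTheory.Limits

universe w v u

namespace Paper

variable {D : Type u} [Category.{v} D] [Abelian D]

section
variable [HasExt.{w} D]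

/-- The right perpendicular class `X^⊥` of a class of objects:
objects `M` with `Ext^i(A, M) = 0` for all `A` in the class and all `i ≥ 1`. -/
def perp (X : D → Prop) : D → Prop :=
  fun M => ∀ A, X A → ∀ i : ℕ, 1 ≤ i → Subsingleton (Abelian.Ext A M i)

end

/-- `CoresSeq W n M Z` : there is an exact sequence
`0 → M → W₀ → ⋯ → W_{n-1} → Z → 0` with each `Wᵢ` in `W`. -/
def CoresSeq (W : D → Prop) : ℕ → D → D → Prop
  | 0, M, Z => Nonempty (M ≅ Z)
  | n + 1, M, Z => ∃ (W₀ K : D) (f : M ⟶ W₀) (g : W₀ ⟶ K) (h : f ≫ g = 0),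
      W W₀ ∧ (ShortComplex.mk f g h).ShortExact ∧ CoresSeq W n K Z

/-- The `W`-coresolution dimension of an object, valued in `ℕ∞`:
the least `n` such that there is an exact sequence `0 → M → W₀ → ⋯ → Wₙ → 0`
with all `Wᵢ` in `W` (and `∞` if there is no such sequence). -/
noncomputable def coresDim (W : D → Prop) (M : D) : ℕ∞ :=
  sInf {n : ℕ∞ | ∃ m : ℕ, n = (m : ℕ∞) ∧ ∃ Z, W Z ∧ CoresSeq W m M Z}


section Aux

variable [HasExt.{w} D]

/-- A chain map to a single complex concentrated in an exact degree is null-homotopic. -/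
noncomputable def toSingleHomotopyZero {K : CochainComplex D ℤ} {I : D} [Injective I] (m : ℤ)
    (hK : K.ExactAt m) (g : K ⟶ (HomologicalComplex.single D (ComplexShape.up ℤ) m).obj I) :
    Homotopy g 0 := by
  have hexact : (K.sc m).Exact := (HomologicalComplex.exactAt_iff _ _).1 hK
  have hf0 : (K.sc m).f ≫ (g.f m ≫ (HomologicalComplex.singleObjXSelf (ComplexShape.up ℤ) m I).hom) = 0 := by
    have h1 := g.comm ((ComplexShape.up ℤ).prev m) m
    show K.d ((ComplexShape.up ℤ).prev m) m ≫ (g.f m ≫ (HomologicalComplex.singleObjXSelf (ComplexShape.up ℤ) m I).hom) = 0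
    rw [← Category.assoc, ← h1]
    rw [HomologicalComplex.single_obj_d]
    simp
  refine
    { hom := fun i j =>
        if h : i = (ComplexShape.up ℤ).next m ∧ j = m then
          eqToHom (congrArg K.X h.1) ≫
            hexact.descToInjective
              (g.f m ≫ (HomologicalComplex.singleObjXSelf (ComplexShape.up ℤ) m I).hom) hf0 ≫
            (HomologicalComplex.singleObjXSelf (ComplexShape.up ℤ) m I).inv ≫
            eqToHom (congrArg ((HomologicalComplex.single D (ComplexShape.up ℤ) m).obj I).X h.2.symm)
        else 0
      zero := ?_
      comm := ?_ }
  · intro i j hij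
    refine dif_neg ?_
    rintro ⟨rfl, rfl⟩
    exact hij (by simp [CochainComplex.next])
  · intro i
    by_cases hi : i = m
    · subst hi
      have hrel : (ComplexShape.up ℤ).Rel i ((ComplexShape.up ℤ).next i) := by
        simp [CochainComplex.next]
      rw [dNext_eq _ hrel, prevD_eq_toPrev_dTo]
      rw [dif_pos ⟨rfl, rfl⟩, eqToHom_refl, eqToHom_refl, Category.id_comp, Category.comp_id]
      have hdT : ((HomologicalComplex.single D (ComplexShape.up ℤ) i).obj I).dTo i = 0 := by
        show ((HomologicalComplex.single D (ComplexShape.up ℤ) i).obj I).d _ i = 0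
        exact HomologicalComplex.single_obj_d _ _ _ _ _
      rw [hdT, comp_zero, add_zero, HomologicalComplex.zero_f, add_zero]
      have hdesc := hexact.comp_descToInjective
        (g.f i ≫ (HomologicalComplex.singleObjXSelf (ComplexShape.up ℤ) i I).hom) hf0
      have hscg : (K.sc i).g = K.d i ((ComplexShape.up ℤ).next i) := rfl
      rw [hscg] at hdesc
      exact (((Category.assoc _ _ _).symm.trans (hdesc =≫ _)).trans ((Category.assoc _ _ _).trans ((g.f i ≫= (HomologicalComplex.singleObjXSelf (ComplexShape.up ℤ) i I).hom_inv_id).trans (Category.comp_id _)))).symm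
    · apply (HomologicalComplex.isZero_single_obj_X (ComplexShape.up ℤ) m I i hi).eq_of_tgt

open DerivedCategory in
lemma ext_subsingleton_of_injective [HasExt.{w} D] (A I : D) (hI : Injective I) (n : ℕ)
    (hn : 1 ≤ n) : Subsingleton (Abelian.Ext A I n) := by
  letI := HasDerivedCategory.standard D
  suffices h : ∀ (φ : (DerivedCategory.singleFunctor D 0).obj A ⟶
      (((DerivedCategory.singleFunctor D 0).obj I)⟦(n : ℤ)⟧)), φ = 0 from
    ⟨fun α β => Abelian.Ext.ext ((h α.hom).trans (h β.hom).symm)⟩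
  have key : ∀ (ψ : (DerivedCategory.singleFunctor D 0).obj A ⟶
      (DerivedCategory.singleFunctor D (-(n:ℤ))).obj I), ψ = 0 := by
    intro ψ
    haveI : (HomotopyCategory.quasiIso D (ComplexShape.up ℤ)).HasRightCalculusOfFractions := by
      rw [HomotopyCategory.quasiIso_eq_subcategoryAcyclic_W]
      infer_instance
    obtain ⟨ψf, hψ⟩ := Localization.exists_rightFraction Qh
      (HomotopyCategory.quasiIso D (ComplexShape.up ℤ))
      (X := (HomotopyCategory.singleFunctor D 0).obj A)
      (Y := (HomotopyCategory.singleFunctor D (-(n:ℤ))).obj I) ψ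
    obtain ⟨g, hg⟩ := (HomotopyCategory.quotient D (ComplexShape.up ℤ)).map_surjective
      (X := ψf.X'.as) (Y := (HomologicalComplex.single D (ComplexShape.up ℤ) (-(n:ℤ))).obj I) ψf.f
    haveI : IsIso ((HomotopyCategory.homologyFunctor D (ComplexShape.up ℤ) (-(n:ℤ))).map ψf.s) :=
      ψf.hs _
    have h1 : IsZero ((HomotopyCategory.homologyFunctor D (ComplexShape.up ℤ) (-(n:ℤ))).obj
        ((HomotopyCategory.singleFunctor D 0).obj A)) :=
      IsZero.of_iso (HomologicalComplex.isZero_single_obj_homology _ 0 A _ (by omega))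
        ((HomotopyCategory.homologyFunctorFactors D (ComplexShape.up ℤ) (-(n:ℤ))).app _)
    have h2 : IsZero ((HomotopyCategory.homologyFunctor D (ComplexShape.up ℤ) (-(n:ℤ))).obj
        ψf.X') :=
      IsZero.of_iso h1 (asIso ((HomotopyCategory.homologyFunctor D (ComplexShape.up ℤ)
        (-(n:ℤ))).map ψf.s))
    have h3 : ψf.X'.as.ExactAt (-(n:ℤ)) := by
      rw [HomologicalComplex.exactAt_iff_isZero_homology]
      exact IsZero.of_iso h2
        ((HomotopyCategory.homologyFunctorFactors D (ComplexShape.up ℤ) (-(n:ℤ))).app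
          ψf.X'.as).symm
    have hgz : ψf.f = 0 := by
      rw [← hg, HomotopyCategory.eq_of_homotopy g 0 (toSingleHomotopyZero (-(n:ℤ)) h3 g),
        Functor.map_zero]
      rfl
    rw [hψ]
    simp [MorphismProperty.RightFraction.map, hgz]
    exact comp_zero
  intro φ
  have e := ((DerivedCategory.singleFunctors D).shiftIso (n : ℤ) (-(n:ℤ)) 0 (by omega)).app I
  rw [← cancel_mono e.hom, zero_comp]
  exact key (φ ≫ e.hom)


open Abelian in
lemma shift_one {S : ShortComplex D} (hS : S.ShortExact) (A : D)
    (hW : ∀ i : ℕ, 1 ≤ i → Subsingleton (Abelian.Ext A S.X₂ i))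
    (i : ℕ) (hi : 1 ≤ i) :
    Subsingleton (Abelian.Ext A S.X₃ i) ↔ Subsingleton (Abelian.Ext A S.X₁ (i + 1)) := by
  constructor
  · intro hsub
    refine subsingleton_of_forall_eq 0 fun y => ?_
    have hy : y.comp (Ext.mk₀ S.f) (add_zero _) = 0 :=
      @Subsingleton.elim _ (hW (i + 1) (by omega)) _ _
    obtain ⟨x₃, hx₃⟩ := Ext.covariant_sequence_exact₁ A hS y hy rfl
    rw [@Subsingleton.elim _ hsub x₃ 0] at hx₃
    rw [← hx₃, Ext.zero_comp]
  · intro hsub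
    refine subsingleton_of_forall_eq 0 fun x => ?_
    have hx : x.comp hS.extClass rfl = 0 := @Subsingleton.elim _ hsub _ _
    obtain ⟨x₂, hx₂⟩ := Ext.covariant_sequence_exact₃ A hS x rfl hx
    rw [@Subsingleton.elim _ (hW i hi) x₂ 0] at hx₂
    rw [← hx₂, Ext.zero_comp]

open Abelian in
lemma ext_subsingleton_of_iso {M Z : D} (e : M ≅ Z) (A : D) (i : ℕ)
    (h : Subsingleton (Abelian.Ext A M i)) : Subsingleton (Abelian.Ext A Z i) := by
  refine subsingleton_of_forall_eq 0 fun y => ?_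
  have : (y.comp (Ext.mk₀ e.inv) (add_zero _)).comp (Ext.mk₀ e.hom) (add_zero _) = y := by
    rw [Ext.comp_assoc_of_second_deg_zero, Ext.mk₀_comp_mk₀, Iso.inv_hom_id, Ext.comp_mk₀_id]
  rw [← this, @Subsingleton.elim _ h (y.comp (Ext.mk₀ e.inv) (add_zero _)) 0, Ext.zero_comp]


open Abelian in
lemma coresSeq_shift (X : D → Prop) (A : D) (hA : X A) :
    ∀ (m : ℕ) (M Z : D), CoresSeq (perp X) m M Z → ∀ i : ℕ, 1 ≤ i →
      (Subsingleton (Abelian.Ext A Z i) ↔ Subsingleton (Abelian.Ext A M (i + m))) := by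
  intro m
  induction m with
  | zero =>
    rintro M Z ⟨e⟩ i hi
    exact ⟨fun h => ext_subsingleton_of_iso e.symm A i h,
      fun h => ext_subsingleton_of_iso e A i h⟩
  | succ m ih =>
    rintro M Z ⟨W₀, K, f, g, hfg, hW₀, hSE, hrest⟩ i hi
    refine (ih K Z hrest i hi).trans ?_
    exact shift_one hSE A (fun j hj => hW₀ A hA j hj) (i + m) (by omega)

lemma injective_mem_perp (X : D → Prop) (Y : D) (hY : Injective Y) : perp X Y :=
  fun A _ i hi => ext_subsingleton_of_injective A Y hY i hi

end Aux

lemma exists_injective_coresSeq [EnoughInjectives D] (W : D → Prop)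
    (hW : ∀ Y : D, Injective Y → W Y) (n : ℕ) :
    ∀ M : D, ∃ Z, CoresSeq W n M Z := by
  induction n with
  | zero => exact fun M => ⟨M, ⟨Iso.refl M⟩⟩
  | succ n ih =>
    intro M
    obtain ⟨Z, hZ⟩ := ih (cokernel (Injective.ι M))
    refine ⟨Z, Injective.under M, cokernel (Injective.ι M), Injective.ι M, cokernel.π _,
      cokernel.condition _, hW _ inferInstance, ⟨?_⟩, hZ⟩
    exact ShortComplex.exact_of_g_is_cokernel _ (cokernelIsCokernel (Injective.ι M))

/-- Lemma 3.2 : characterizations of `X^⊥`-coresolution dimension `≤ n`. -/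
theorem stmt_0 [EnoughProjectives D] [EnoughInjectives D] [HasExt.{w} D]
    (X : D → Prop) (hX : ∀ A B : D, (A ≅ B) → X A → X B)
    (M : D) (n : ℕ) :
    (coresDim (perp X) M ≤ (n : ℕ∞) ↔
      ∀ A, X A → ∀ k : ℕ, 1 ≤ k → Subsingleton (Abelian.Ext A M (n + k))) ∧
    (coresDim (perp X) M ≤ (n : ℕ∞) ↔
      ∀ Z : D, CoresSeq (perp X) n M Z → perp X Z) := by
  have le_of_seq : ∀ Z : D, perp X Z → CoresSeq (perp X) n M Z →
      coresDim (perp X) M ≤ (n : ℕ∞) := fun Z hZ hseq =>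
    sInf_le ⟨n, rfl, Z, hZ, hseq⟩
  have h12 : coresDim (perp X) M ≤ (n : ℕ∞) →
      ∀ A, X A → ∀ k : ℕ, 1 ≤ k → Subsingleton (Abelian.Ext A M (n + k)) := by
    intro hle A hA k hk
    have hne : {n : ℕ∞ | ∃ m : ℕ, n = (m : ℕ∞) ∧
        ∃ Z, perp X Z ∧ CoresSeq (perp X) m M Z}.Nonempty := by
      by_contra h
      rw [Set.not_nonempty_iff_eq_empty] at h
      rw [coresDim, h, sInf_empty, top_le_iff] at hle
      exact (ENat.coe_ne_top n) hle
    have hmem := csInf_mem hne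
    obtain ⟨m, hm, Z, hZ, hseq⟩ := hmem
    rw [coresDim] at hle
    rw [hm] at hle
    have hmn : m ≤ n := by exact_mod_cast hle
    have := (coresSeq_shift X A hA m M Z hseq (n + k - m) (by omega)).1
      (hZ A hA _ (by omega))
    rwa [show n + k - m + m = n + k by omega] at this
  have h23 : (∀ A, X A → ∀ k : ℕ, 1 ≤ k → Subsingleton (Abelian.Ext A M (n + k))) →
      ∀ Z : D, CoresSeq (perp X) n M Z → perp X Z := by
    intro h2 Z hseq A hA i hi
    refine (coresSeq_shift X A hA n M Z hseq i hi).2 ?_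
    have := h2 A hA i hi
    rwa [show n + i = i + n by omega] at this
  have h31 : (∀ Z : D, CoresSeq (perp X) n M Z → perp X Z) →
      coresDim (perp X) M ≤ (n : ℕ∞) := by
    intro h3
    obtain ⟨Z, hseq⟩ := exists_injective_coresSeq (perp X) (injective_mem_perp X) n M
    exact le_of_seq Z (h3 Z hseq) hseq
  exact ⟨⟨h12, fun h2 => h31 (h23 h2)⟩, ⟨fun h1 => h23 (h12 h1), h31⟩⟩

end Paper
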